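/- Let Q = {Q_{d,k}} and P = {P_{d,k}} be (0,1,β,Ω)-Euler data with Q_{d,0} = P_{d,0} for all d ≥ 0. Fix k ≥ 1 and d ≥ 1 and suppose that Q_{d′,k} = P_{d′,k} for all 0 ≤ d′ < d. Then for each 0 ≤ i ≤ n the polynomial Q_{d,k}(λ_i) − P_{d,k}(λ_i) ∈ F[ℏ] is divisible by ∏_{j≠i} ∏_{m=1}^{d} (λ_i − λ_j − mℏ) in F[ℏ]. -/

import Mathlib

open Polynomial

set_option maxHeartbeats 1000000
set_option synthInstance.maxHeartbeats 400000

noncomputable section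

/-- The ground field `F = ℂ(λ₀,…,λₙ)`, the field of rational functions in the
equivariant weights `λ₀,…,λₙ`. -/
def F (n : ℕ) : Type := FractionRing (MvPolynomial (Fin (n+1)) ℂ)

instance (n : ℕ) : Field (F n) :=
  inferInstanceAs (Field (FractionRing (MvPolynomial (Fin (n+1)) ℂ)))

instance (n : ℕ) : Algebra (MvPolynomial (Fin (n+1)) ℂ) (F n) :=
  inferInstanceAs (Algebra (MvPolynomial (Fin (n+1)) ℂ)
    (FractionRing (MvPolynomial (Fin (n+1)) ℂ)))

/-- The weight `λᵢ` as an element of `F`. -/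
def lam (n : ℕ) (i : Fin (n+1)) : F n :=
  algebraMap (MvPolynomial (Fin (n+1)) ℂ) (F n) (MvPolynomial.X i)

/-- The polynomial ring `F[ℏ]`.  The variable `X` plays the role of `ℏ`. -/
abbrev Fh (n : ℕ) : Type := Polynomial (F n)

/-- The element `λᵢ + rℏ` of `F[ℏ]`. -/
def pt (n : ℕ) (i : Fin (n+1)) (r : ℕ) : Fh n := C (lam n i) + (r : Fh n) * X

/-- The generator `∏_{l=0}^{n} ∏_{m=0}^{d} (κ − λ_l − mℏ)` of the relation ideal
of the localized equivariant cohomology of `N_d`; the outer polynomial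
variable `X` plays the role of `κ`. -/
def genN (n d : ℕ) : Polynomial (Fh n) :=
  ∏ l : Fin (n+1), ∏ m ∈ Finset.range (d+1), (X - C (pt n l m))

/-- Classes on the linear model `N_d`:
`F[ℏ][κ] / (∏_{l=0}^{n} ∏_{m=0}^{d} (κ − λ_l − mℏ))`. -/
abbrev ClassN (n d : ℕ) : Type :=
  Polynomial (Fh n) ⧸ Ideal.span {genN n d}

lemma eval_genN (n d : ℕ) (i : Fin (n+1)) (r : ℕ) (hr : r ≤ d) :
    Polynomial.eval (pt n i r) (genN n d) = 0 := by
  rw [genN, Polynomial.eval_prod]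
  refine Finset.prod_eq_zero (Finset.mem_univ i) ?_
  rw [Polynomial.eval_prod]
  refine Finset.prod_eq_zero (Finset.mem_range.mpr (Nat.lt_succ_of_le hr)) ?_
  simp

/-- Restriction `Q(λᵢ + rℏ) ∈ F[ℏ]` of a class `Q` on `N_d` (for `r ≤ d`):
evaluation of any representative at `κ = λᵢ + rℏ`. -/
def rest {n d : ℕ} (i : Fin (n+1)) (r : ℕ) (hr : r ≤ d) : ClassN n d →+* Fh n :=
  Ideal.Quotient.lift _ (Polynomial.evalRingHom (pt n i r)) (by
    intro a ha
    rw [Ideal.mem_span_singleton] at ha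
    obtain ⟨c, rfl⟩ := ha
    simp [eval_genN n d i r hr])

/-- `Ω`-Euler data, where the invertible class `Ω` on `ℙⁿ` is identified with the family
of its restrictions `Ω(λᵢ) ∈ F` (the weights `λᵢ` being pairwise distinct, a class on
`ℙⁿ` is precisely such a family). -/
def IsEulerData {n : ℕ} (Ω : Fin (n+1) → F n) (Q : (d : ℕ) → ClassN n d) : Prop :=
  (∀ i, rest i 0 le_rfl (Q 0) = C (Ω i)) ∧
  ∀ d r, 0 < r → ∀ hr : r < d, ∀ i : Fin (n+1),
    C (Ω i) * rest i r hr.le (Q d) =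
      rest i r le_rfl (Q r) * rest i 0 (Nat.zero_le _) (Q (d - r))

/-- `(0,1,β,Ω)`-Euler data; the classes `β`, `Ω` on `ℙⁿ` are identified with the
families of their restrictions at the fixed points. -/
def Is01EulerData {n : ℕ} (β Ω : Fin (n+1) → F n) (Q : (d : ℕ) → ℕ → ClassN n d) : Prop :=
  (∀ (k : ℕ) i, rest i 0 le_rfl (Q 0 k) = C (β i ^ k * Ω i)) ∧
  ∀ d, 1 ≤ d → ∀ r, ∀ hr : r ≤ d, ∀ i : Fin (n+1), ∀ k : ℕ,
    C (Ω i) * rest i r hr (Q d k) =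
      rest i r le_rfl (Q r 0) * rest i 0 (Nat.zero_le _) (Q (d - r) k)

end


section EulerAux

instance instIsFractionRingF (n : ℕ) : IsFractionRing (MvPolynomial (Fin (n+1)) ℂ) (F n) :=
  inferInstanceAs (IsFractionRing (MvPolynomial (Fin (n+1)) ℂ)
    (FractionRing (MvPolynomial (Fin (n+1)) ℂ)))

instance instCharZeroF (n : ℕ) : CharZero (F n) :=
  charZero_of_injective_algebraMap
    (IsFractionRing.injective (MvPolynomial (Fin (n+1)) ℂ) (F n))

lemma lam_linear_indep (n : ℕ) (i j j' : Fin (n+1)) (m m' : ℕ)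
    (hj : j ≠ i) (hj' : j' ≠ i) (hm : 1 ≤ m) (_hm' : 1 ≤ m')
    (h : (m' : F n) * (lam n i - lam n j) = (m : F n) * (lam n i - lam n j')) :
    j = j' ∧ m = m' := by
  classical
  have hinj : Function.Injective (algebraMap (MvPolynomial (Fin (n+1)) ℂ) (F n)) :=
    IsFractionRing.injective _ _
  have h' : (m' : MvPolynomial (Fin (n+1)) ℂ) * (MvPolynomial.X i - MvPolynomial.X j)
      = (m : MvPolynomial (Fin (n+1)) ℂ) * (MvPolynomial.X i - MvPolynomial.X j') := by
    apply hinj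
    simp only [map_mul, map_sub, map_natCast]
    simpa only [lam] using h
  by_cases hjj : j = j'
  · subst hjj
    refine ⟨rfl, ?_⟩
    have h2 : ((m' : MvPolynomial (Fin (n+1)) ℂ) - (m : MvPolynomial (Fin (n+1)) ℂ))
        * (MvPolynomial.X i - MvPolynomial.X j) = (0 : MvPolynomial (Fin (n+1)) ℂ) := by
      linear_combination h'
    rcases mul_eq_zero.mp h2 with h3 | h3
    · have h4 : (m' : MvPolynomial (Fin (n+1)) ℂ) = (m : MvPolynomial (Fin (n+1)) ℂ) :=
        sub_eq_zero.mp h3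
      exact (Nat.cast_injective h4).symm
    · exact absurd (MvPolynomial.X_injective (sub_eq_zero.mp h3)) (Ne.symm hj)
  · exfalso
    have hc := congrArg (MvPolynomial.coeff (Finsupp.single j' 1)) h'
    rw [← MvPolynomial.C_eq_coe_nat, ← MvPolynomial.C_eq_coe_nat] at hc
    simp only [mul_sub, MvPolynomial.coeff_sub, MvPolynomial.coeff_C_mul,
      MvPolynomial.coeff_X'] at hc
    have e1 : ¬ (Finsupp.single i 1 = Finsupp.single j' 1) := by
      simp [Finsupp.single_eq_single_iff, Ne.symm hj']
    have e2 : ¬ (Finsupp.single j 1 = Finsupp.single j' 1) := by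
      simp [Finsupp.single_eq_single_iff, hjj]
    simp [e1, e2] at hc
    omega

lemma rest_mk {n d : ℕ} (i : Fin (n+1)) (r : ℕ) (hr : r ≤ d) (q : Polynomial (Fh n)) :
    rest i r hr (Ideal.Quotient.mk (Ideal.span {genN n d}) q) = q.eval (pt n i r) :=
  Ideal.Quotient.lift_mk _ _ _

lemma factor_eq (n : ℕ) (a : F n) (m : ℕ) (hm : (m : F n) ≠ 0) :
    (C a - (m : Fh n) * X : Fh n) = (X - C (a / (m : F n))) * (-(C ((m : F n)))) := by
  rw [← Polynomial.C_eq_natCast]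
  have h : (C ((m : F n)) * C (a / (m : F n)) : Fh n) = C a := by
    rw [← map_mul]
    congr 1
    field_simp
  linear_combination -h

end EulerAux

/-- Divisibility of the difference `Q_{d,k}(λᵢ) − P_{d,k}(λᵢ)` by
`∏_{j≠i} ∏_{m=1}^{d} (λᵢ − λⱼ − mℏ)`, for `(0,1,β,Ω)`-Euler data agreeing at
height `0` and (at height `k`) in all degrees `< d`. -/
theorem difference_divisible (n : ℕ) (hn : 1 ≤ n)
    (β Ω : Fin (n+1) → F n) (hΩ : ∀ i, Ω i ≠ 0)
    (Q P : (d : ℕ) → ℕ → ClassN n d)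
    (hQ : Is01EulerData β Ω Q) (hP : Is01EulerData β Ω P)
    (h0 : ∀ d, Q d 0 = P d 0)
    (k : ℕ) (hk : 1 ≤ k) (d : ℕ) (hd : 1 ≤ d)
    (hlow : ∀ d' : ℕ, d' < d → Q d' k = P d' k) :
    ∀ i : Fin (n+1),
      (∏ j ∈ Finset.univ.erase i, ∏ m ∈ Finset.Icc 1 d,
          (C (lam n i - lam n j) - (m : Fh n) * X)) ∣
        (rest i 0 (Nat.zero_le d) (Q d k) - rest i 0 (Nat.zero_le d) (P d k)) := by
  classical
  intro i
  obtain ⟨q, hq'⟩ := Ideal.Quotient.mk_surjective (Q d k)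
  obtain ⟨p, hp'⟩ := Ideal.Quotient.mk_surjective (P d k)
  have hQrest : ∀ (j : Fin (n+1)) (r : ℕ) (hr : r ≤ d),
      rest j r hr (Q d k) = q.eval (pt n j r) := by
    intro j r hr; rw [← hq']; exact rest_mk j r hr q
  have hPrest : ∀ (j : Fin (n+1)) (r : ℕ) (hr : r ≤ d),
      rest j r hr (P d k) = p.eval (pt n j r) := by
    intro j r hr; rw [← hp']; exact rest_mk j r hr p
  have hzero : ∀ (j : Fin (n+1)) (m : ℕ), 1 ≤ m → ∀ hm : m ≤ d,
      q.eval (pt n j m) = p.eval (pt n j m) := by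
    intro j m hm1 hmd
    have e1 := hQ.2 d hd m hmd j k
    have e2 := hP.2 d hd m hmd j k
    rw [h0 m, hlow (d - m) (by omega)] at e1
    have e3 : C (Ω j) * rest j m hmd (Q d k) = C (Ω j) * rest j m hmd (P d k) :=
      e1.trans e2.symm
    have e4 := mul_left_cancel₀ (Polynomial.C_ne_zero.mpr (hΩ j)) e3
    rwa [hQrest j m hmd, hPrest j m hmd] at e4
  set T : Fh n := rest i 0 (Nat.zero_le d) (Q d k) - rest i 0 (Nat.zero_le d) (P d k) with hT
  have hTq : T = (q - p).eval (pt n i 0) := by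
    rw [hT, hQrest i 0 (Nat.zero_le d), hPrest i 0 (Nat.zero_le d), Polynomial.eval_sub]
  have hdvd : ∀ (j : Fin (n+1)), j ≠ i → ∀ (m : ℕ), 1 ≤ m → m ≤ d →
      (C (lam n i - lam n j) - (m : Fh n) * X) ∣ T := by
    intro j hji m hm1 hmd
    have hm0 : (m : F n) ≠ 0 := Nat.cast_ne_zero.mpr (by omega)
    set ρ : F n := (lam n i - lam n j) / (m : F n) with hρ
    have hmρ : (m : F n) * ρ = lam n i - lam n j := by
      rw [hρ]; field_simp
    have h1 : Polynomial.eval ρ (pt n i 0) = lam n i := by simp [pt]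
    have h2 : Polynomial.eval ρ (pt n j m) = lam n i := by
      simp only [pt, Polynomial.eval_add, Polynomial.eval_mul, Polynomial.eval_C,
        Polynomial.eval_natCast, Polynomial.eval_X]
      rw [hmρ]; ring
    have hroot : T.eval ρ = 0 := by
      have c1 := Polynomial.eval₂_at_apply (p := q - p) (Polynomial.evalRingHom ρ) (pt n i 0)
      have c2 := Polynomial.eval₂_at_apply (p := q - p) (Polynomial.evalRingHom ρ) (pt n j m)
      have key : (Polynomial.evalRingHom ρ) ((q - p).eval (pt n i 0))
          = (Polynomial.evalRingHom ρ) ((q - p).eval (pt n j m)) := by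
        rw [← c1, ← c2]
        congr 1
        simp only [Polynomial.coe_evalRingHom]
        rw [h1, h2]
      rw [hTq]
      have hz : (q - p).eval (pt n j m) = 0 := by
        rw [Polynomial.eval_sub, hzero j m hm1 hmd, sub_self]
      simpa [hz] using key
    have hXC : (X - C ρ) ∣ T := Polynomial.dvd_iff_isRoot.mpr hroot
    rw [factor_eq n (lam n i - lam n j) m hm0]
    obtain ⟨u, hu⟩ := (Polynomial.isUnit_C.mpr (isUnit_iff_ne_zero.mpr hm0)).neg
    rw [← hu]
    exact Units.mul_right_dvd.mpr hXC
  have hρne : ∀ (j j' : Fin (n+1)), j ≠ i → j' ≠ i → ∀ (m m' : ℕ), 1 ≤ m → 1 ≤ m' →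
      (j, m) ≠ (j', m') →
      (lam n i - lam n j) / (m : F n) ≠ (lam n i - lam n j') / (m' : F n) := by
    intro j j' hji hj'i m m' hm hm' hne heq
    have hm0 : (m : F n) ≠ 0 := Nat.cast_ne_zero.mpr (by omega)
    have hm'0 : (m' : F n) ≠ 0 := Nat.cast_ne_zero.mpr (by omega)
    rw [div_eq_div_iff hm0 hm'0] at heq
    have hkey := lam_linear_indep n i j j' m m' hji hj'i hm hm'
      (by linear_combination heq)
    exact hne (Prod.ext hkey.1 hkey.2)
  have hcop : (↑((Finset.univ.erase i) ×ˢ Finset.Icc 1 d) : Set (Fin (n+1) × ℕ)).Pairwise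
      (Function.onFun IsCoprime fun jm : Fin (n+1) × ℕ =>
        C (lam n i - lam n jm.1) - (jm.2 : Fh n) * X) := by
    rintro ⟨j, m⟩ hjm ⟨j', m'⟩ hjm' hne
    rw [Finset.mem_coe, Finset.mem_product, Finset.mem_erase, Finset.mem_Icc] at hjm hjm'
    have hm0 : (m : F n) ≠ 0 := Nat.cast_ne_zero.mpr (by omega)
    have hm'0 : (m' : F n) ≠ 0 := Nat.cast_ne_zero.mpr (by omega)
    have goal : IsCoprime (C (lam n i - lam n j) - (m : Fh n) * X)
        (C (lam n i - lam n j') - (m' : Fh n) * X) := by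
      rw [factor_eq n (lam n i - lam n j) m hm0, factor_eq n (lam n i - lam n j') m' hm'0,
        isCoprime_mul_unit_right_left (Polynomial.isUnit_C.mpr (isUnit_iff_ne_zero.mpr hm0)).neg,
        isCoprime_mul_unit_right_right
          (Polynomial.isUnit_C.mpr (isUnit_iff_ne_zero.mpr hm'0)).neg]
      exact Polynomial.isCoprime_X_sub_C_of_isUnit_sub (isUnit_iff_ne_zero.mpr
        (sub_ne_zero.mpr (hρne j j' hjm.1.1 hjm'.1.1 m m' hjm.2.1 hjm'.2.1 hne)))
    exact goal
  rw [← Finset.prod_product']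
  refine Finset.prod_dvd_of_coprime hcop ?_
  rintro ⟨j, m⟩ hjm
  rw [Finset.mem_product, Finset.mem_erase, Finset.mem_Icc] at hjm
  exact hdvd j hjm.1.1 m hjm.2.1 hjm.2.2
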